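/- Fix a real p with 0 < p ≤ 1 and q = 1 − p, and let n ≥ 2 be an integer. Then Σ_{w ∈ (ℤ⁺)ⁿ} P(w)·hsp(w) = (p·q/(1−q³))·(n−2), where the sum over all words w of length n converges absolutely. In other words, the expected value of the sum of heights of symmetric peaks in a sample of n geometric random variables is pq(n−2)/(1−q³). -/

import Mathlib

/-- The indices (0-based) of symmetric peaks of a list of naturals:
`i` is a symmetric peak if `L i < L (i+1)` and `L i = L (i+2)`. -/
def symPeakIdx (L : List ℕ) : Finset ℕ :=
  (Finset.range L.length).filter (fun i =>
    i + 2 < L.length ∧ L.getD i 0 < L.getD (i+1) 0 ∧ L.getD i 0 = L.getD (i+2) 0)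

/-- `hsp w`: the sum of the heights of the symmetric peaks of `w`. -/
def hspL (L : List ℕ) : ℕ := ∑ i ∈ symPeakIdx L, (L.getD (i+1) 0 - L.getD i 0)

/-- The probability of the word `w` of length `n` with i.i.d. geometric letters:
`P(w) = ∏_{i} p·q^{wᵢ−1}`. -/
def wordP (p q : ℝ) {n : ℕ} (w : Fin n → ℕ+) : ℝ :=
  ∏ i : Fin n, p * q ^ ((w i : ℕ) - 1)

open scoped ENNReal

lemma tsum_pi_prod : ∀ {n : ℕ} (c : Fin n → ℕ+ → ℝ≥0∞),
    ∑' w : Fin n → ℕ+, ∏ j, c j (w j) = ∏ j, ∑' x, c j x := by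
  intro n
  induction n with
  | zero => intro c; simp [tsum_fintype]
  | succ n ih =>
    intro c
    rw [← (Fin.consEquiv fun _ : Fin (n+1) => ℕ+).tsum_eq]
    have : ∀ x : ℕ+ × (Fin n → ℕ+),
        (∏ j, c j (((Fin.consEquiv fun _ : Fin (n+1) => ℕ+) x) j))
        = c 0 x.1 * ∏ j : Fin n, c j.succ (x.2 j) := by
      intro x
      rw [Fin.prod_univ_succ]
      simp [Fin.consEquiv]
    calc ∑' x : ℕ+ × (Fin n → ℕ+), ∏ j, c j (((Fin.consEquiv fun _ : Fin (n+1) => ℕ+) x) j)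
        = ∑' (a : ℕ+) (g : Fin n → ℕ+), c 0 a * ∏ j : Fin n, c j.succ (g j) := by
          rw [← ENNReal.tsum_prod]; exact tsum_congr fun x => this x
      _ = (∑' a : ℕ+, c 0 a) * ∑' g : Fin n → ℕ+, ∏ j : Fin n, c j.succ (g j) := by
          rw [← ENNReal.tsum_mul_right]
          exact tsum_congr fun a => ENNReal.tsum_mul_left
      _ = ∏ j, ∑' x, c j x := by rw [ih, Fin.prod_univ_succ]

lemma tsum_geo_one {p q : ℝ} (hp : 0 < p) (hp1 : p ≤ 1) (hq : q = 1 - p) :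
    ∑' x : ℕ+, ENNReal.ofReal p * ENNReal.ofReal q ^ ((x : ℕ) - 1) = 1 := by
  have hq0 : 0 ≤ q := by simp [hq]; linarith
  rw [← Equiv.pnatEquivNat.symm.tsum_eq]
  have : ∀ k : ℕ, ((Equiv.pnatEquivNat.symm k : ℕ+) : ℕ) - 1 = k := by
    intro k; simp [Equiv.pnatEquivNat]
  calc ∑' k : ℕ, ENNReal.ofReal p * ENNReal.ofReal q ^ (((Equiv.pnatEquivNat.symm k : ℕ+) : ℕ) - 1)
      = ∑' k : ℕ, ENNReal.ofReal p * ENNReal.ofReal q ^ k := by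
        exact tsum_congr fun k => by rw [this]
    _ = ENNReal.ofReal p * (1 - ENNReal.ofReal q)⁻¹ := by
        rw [ENNReal.tsum_mul_left, ENNReal.tsum_geometric]
    _ = 1 := by
        have : (1 : ℝ≥0∞) - ENNReal.ofReal q = ENNReal.ofReal p := by
          rw [← ENNReal.ofReal_one, ← ENNReal.ofReal_sub _ hq0]
          congr 1; rw [hq]; ring
        rw [this]
        exact ENNReal.mul_inv_cancel (by simp [hp]) (by simp)


section
variable {p q : ℝ} {n : ℕ}

/-- the constrained one-letter weight -/
noncomputable def cw (p q : ℝ) {n : ℕ} (i0 i1 i2 : Fin n) (a b : ℕ+) (j : Fin n) (x : ℕ+) : ℝ≥0∞ :=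
  if (j = i0 ∧ x ≠ a) ∨ (j = i1 ∧ x ≠ b) ∨ (j = i2 ∧ x ≠ a) then 0
  else ENNReal.ofReal p * ENNReal.ofReal q ^ ((x : ℕ) - 1)

lemma cw_prod (i0 i1 i2 : Fin n) (a b : ℕ+) (w : Fin n → ℕ+) :
    ∏ j, cw p q i0 i1 i2 a b j (w j) =
      if w i0 = a ∧ w i1 = b ∧ w i2 = a
      then ∏ j, ENNReal.ofReal p * ENNReal.ofReal q ^ ((w j : ℕ) - 1) else 0 := by
  by_cases h : w i0 = a ∧ w i1 = b ∧ w i2 = a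
  · rw [if_pos h]
    refine Finset.prod_congr rfl fun j _ => ?_
    unfold cw
    rw [if_neg]
    rintro (⟨rfl, hx⟩ | ⟨rfl, hx⟩ | ⟨rfl, hx⟩)
    · exact hx h.1
    · exact hx h.2.1
    · exact hx h.2.2
  · rw [if_neg h]
    push_neg at h
    by_cases h1 : w i0 = a
    · by_cases h2 : w i1 = b
      · refine Finset.prod_eq_zero (Finset.mem_univ i2) ?_
        unfold cw; rw [if_pos (Or.inr (Or.inr ⟨rfl, h h1 h2⟩))]
      · refine Finset.prod_eq_zero (Finset.mem_univ i1) ?_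
        unfold cw; rw [if_pos (Or.inr (Or.inl ⟨rfl, h2⟩))]
    · refine Finset.prod_eq_zero (Finset.mem_univ i0) ?_
      unfold cw; rw [if_pos (Or.inl ⟨rfl, h1⟩)]

lemma tsum_cw (hp : 0 < p) (hp1 : p ≤ 1) (hq : q = 1 - p)
    (i0 i1 i2 : Fin n) (h01 : i0 ≠ i1) (h02 : i0 ≠ i2) (h12 : i1 ≠ i2) (a b : ℕ+) :
    ∏ j, (∑' x : ℕ+, cw p q i0 i1 i2 a b j x) =
      (ENNReal.ofReal p * ENNReal.ofReal q ^ ((a:ℕ)-1)) *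
      ((ENNReal.ofReal p * ENNReal.ofReal q ^ ((b:ℕ)-1)) *
      (ENNReal.ofReal p * ENNReal.ofReal q ^ ((a:ℕ)-1))) := by
  have key : ∀ (j : Fin n) (v : ℕ+), j = i0 ∨ j = i1 ∨ j = i2 →
      ((j = i0 → v = a) ∧ (j = i1 → v = b) ∧ (j = i2 → v = a)) →
      ∑' x : ℕ+, cw p q i0 i1 i2 a b j x
        = ENNReal.ofReal p * ENNReal.ofReal q ^ ((v:ℕ)-1) := by
    intro j v hj hv
    rw [tsum_eq_single v]
    · unfold cw
      rw [if_neg]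
      rintro (⟨rfl, hx⟩ | ⟨rfl, hx⟩ | ⟨rfl, hx⟩)
      exacts [hx (hv.1 rfl), hx (hv.2.1 rfl), hx (hv.2.2 rfl)]
    · intro x hx
      unfold cw
      rw [if_pos]
      rcases hj with rfl | rfl | rfl
      · exact Or.inl ⟨rfl, fun hh => hx (hh.trans (hv.1 rfl).symm)⟩
      · exact Or.inr (Or.inl ⟨rfl, fun hh => hx (hh.trans (hv.2.1 rfl).symm)⟩)
      · exact Or.inr (Or.inr ⟨rfl, fun hh => hx (hh.trans (hv.2.2 rfl).symm)⟩)
  have houts : ∀ j : Fin n, j ∉ ({i0, i1, i2} : Finset (Fin n)) →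
      ∑' x : ℕ+, cw p q i0 i1 i2 a b j x = 1 := by
    intro j hj
    simp only [Finset.mem_insert, Finset.mem_singleton, not_or] at hj
    have : ∀ x : ℕ+, cw p q i0 i1 i2 a b j x
        = ENNReal.ofReal p * ENNReal.ofReal q ^ ((x:ℕ)-1) := by
      intro x; unfold cw; rw [if_neg]
      rintro (⟨rfl, -⟩ | ⟨rfl, -⟩ | ⟨rfl, -⟩)
      exacts [hj.1 rfl, hj.2.1 rfl, hj.2.2 rfl]
    rw [tsum_congr this, tsum_geo_one hp hp1 hq]
  rw [← Finset.prod_subset (Finset.subset_univ ({i0, i1, i2} : Finset (Fin n)))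
    (fun j _ hj => houts j hj)]
  rw [Finset.prod_insert (by simp [h01, h02]), Finset.prod_insert (by simp [h12]),
    Finset.prod_singleton]
  rw [key i0 a (Or.inl rfl) ⟨fun _ => rfl, fun h => absurd h h01, fun h => absurd h h02⟩,
    key i1 b (Or.inr (Or.inl rfl)) ⟨fun h => absurd h.symm h01, fun _ => rfl,
      fun h => absurd h h12⟩,
    key i2 a (Or.inr (Or.inr rfl)) ⟨fun h => absurd h.symm h02,
      fun h => absurd h.symm h12, fun _ => rfl⟩]
end


lemma hsp_eq (n : ℕ) (L : List ℕ) (hL : L.length = n) :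
    hspL L = ∑ i ∈ Finset.range (n-2),
      (if L.getD i 0 < L.getD (i+1) 0 ∧ L.getD i 0 = L.getD (i+2) 0
       then L.getD (i+1) 0 - L.getD i 0 else 0) := by
  unfold hspL symPeakIdx
  rw [Finset.sum_filter, hL]
  rw [← Finset.sum_subset (Finset.range_subset_range.mpr (show n-2 ≤ n by omega))]
  · refine Finset.sum_congr rfl fun i hi => ?_
    rw [Finset.mem_range] at hi
    have h2 : i + 2 < n := by omega
    simp [h2, hL]
  · intro i hi hni
    rw [Finset.mem_range] at hi hni
    rw [if_neg]
    rintro ⟨h, -⟩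
    omega

lemma getD_ofFn {n : ℕ} (w : Fin n → ℕ+) (i : ℕ) (h : i < n) :
    (List.ofFn fun j => (w j : ℕ)).getD i 0 = (w ⟨i, h⟩ : ℕ) := by
  rw [List.getD_eq_getElem _ _ (by simpa using h), List.getElem_ofFn]

lemma pnat_eq_succPNat (x : ℕ+) (m : ℕ) (h : (x : ℕ) = m + 1) : x = Nat.succPNat m :=
  PNat.coe_injective (by simpa using h)

lemma tsum_gi {p q : ℝ} {n : ℕ} (hp : 0 < p) (hp1 : p ≤ 1) (hq : q = 1 - p)
    (i0 i1 i2 : Fin n) (h01 : i0 ≠ i1) (h02 : i0 ≠ i2) (h12 : i1 ≠ i2) :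
    ∑' w : Fin n → ℕ+, ((∏ j, ENNReal.ofReal p * ENNReal.ofReal q ^ ((w j : ℕ) - 1)) *
      (if (w i0 : ℕ) < (w i1 : ℕ) ∧ (w i0 : ℕ) = (w i2 : ℕ)
       then (((w i1 : ℕ) - (w i0 : ℕ) : ℕ) : ℝ≥0∞) else 0))
    = ENNReal.ofReal (p * q / (1 - q ^ 3)) := by
  have hq0 : 0 ≤ q := by rw [hq]; linarith
  have hq1 : q < 1 := by rw [hq]; linarith
  have claim1 : ∀ w : Fin n → ℕ+,
      (∏ j, ENNReal.ofReal p * ENNReal.ofReal q ^ ((w j : ℕ) - 1)) *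
      (if (w i0 : ℕ) < (w i1 : ℕ) ∧ (w i0 : ℕ) = (w i2 : ℕ)
       then (((w i1 : ℕ) - (w i0 : ℕ) : ℕ) : ℝ≥0∞) else 0)
      = ∑' kh : ℕ × ℕ, ((kh.2 + 1 : ℕ) : ℝ≥0∞) *
          ∏ j, cw p q i0 i1 i2 (Nat.succPNat kh.1) (Nat.succPNat (kh.1 + kh.2 + 1)) j (w j) := by
    intro w
    by_cases hw : (w i0 : ℕ) < (w i1 : ℕ) ∧ (w i0 : ℕ) = (w i2 : ℕ)
    · rw [if_pos hw]
      rw [tsum_eq_single ((w i0 : ℕ) - 1, (w i1 : ℕ) - (w i0 : ℕ) - 1)]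
      · rw [cw_prod, if_pos]
        · have hc : ((w i1 : ℕ) - (w i0 : ℕ) - 1 + 1 : ℕ) = (w i1 : ℕ) - (w i0 : ℕ) := by
            omega
          rw [hc, mul_comm]
        · refine ⟨pnat_eq_succPNat _ _ (by have := (w i0).pos; omega),
            pnat_eq_succPNat _ _ (by have := (w i0).pos; omega),
            pnat_eq_succPNat _ _ (by have := (w i0).pos; omega)⟩
      · intro kh hne
        rw [cw_prod, if_neg, mul_zero]
        rintro ⟨ha, hb, -⟩
        apply hne
        have ha' : (w i0 : ℕ) = kh.1 + 1 := by rw [ha]; simp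
        have hb' : (w i1 : ℕ) = kh.1 + kh.2 + 2 := by rw [hb]; simp
        exact Prod.ext (by omega) (by omega)
    · rw [if_neg hw, mul_zero]
      symm
      rw [ENNReal.tsum_eq_zero]
      intro kh
      rw [cw_prod, if_neg, mul_zero]
      rintro ⟨ha, hb, hc⟩
      apply hw
      have ha' : (w i0 : ℕ) = kh.1 + 1 := by rw [ha]; simp
      have hb' : (w i1 : ℕ) = kh.1 + kh.2 + 2 := by rw [hb]; simp
      have hc' : (w i2 : ℕ) = kh.1 + 1 := by rw [hc]; simp
      omega
  rw [tsum_congr claim1, ENNReal.tsum_comm]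
  have step2 : ∀ kh : ℕ × ℕ,
      ∑' w : Fin n → ℕ+, ((kh.2 + 1 : ℕ) : ℝ≥0∞) *
        ∏ j, cw p q i0 i1 i2 (Nat.succPNat kh.1) (Nat.succPNat (kh.1 + kh.2 + 1)) j (w j)
      = (ENNReal.ofReal q ^ 3) ^ kh.1 *
        (((kh.2 + 1 : ℕ) : ℝ≥0∞) * (ENNReal.ofReal p ^ 3 * ENNReal.ofReal q ^ (kh.2 + 1))) := by
    intro kh
    rw [ENNReal.tsum_mul_left, tsum_pi_prod,
      tsum_cw hp hp1 hq i0 i1 i2 h01 h02 h12]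
    simp only [Nat.succPNat_coe, Nat.succ_sub_one, Nat.add_sub_cancel]
    ring
  rw [tsum_congr step2, ENNReal.tsum_prod (f := fun k h => (ENNReal.ofReal q ^ 3) ^ k *
    (((h + 1 : ℕ) : ℝ≥0∞) * (ENNReal.ofReal p ^ 3 * ENNReal.ofReal q ^ (h + 1))))]
  have step3 : ∀ k : ℕ,
      ∑' h : ℕ, (ENNReal.ofReal q ^ 3) ^ k *
        (((h + 1 : ℕ) : ℝ≥0∞) * (ENNReal.ofReal p ^ 3 * ENNReal.ofReal q ^ (h + 1)))
      = (ENNReal.ofReal q ^ 3) ^ k *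
        ∑' h : ℕ, (((h + 1 : ℕ) : ℝ≥0∞) * (ENNReal.ofReal p ^ 3 * ENNReal.ofReal q ^ (h + 1))) :=
    fun k => ENNReal.tsum_mul_left
  rw [tsum_congr step3, ENNReal.tsum_mul_right, ENNReal.tsum_geometric]
  -- inner series
  have hnorm : ‖q‖ < 1 := by rw [Real.norm_eq_abs, abs_of_nonneg hq0]; exact hq1
  have hs : Summable (fun m : ℕ => (m : ℝ) * q ^ m) := by
    simpa using summable_pow_mul_geometric_of_norm_lt_one 1 hnorm
  have hs2 : Summable (fun h : ℕ => ((h : ℝ) + 1) * q ^ (h + 1)) :=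
    (hs.comp_injective (add_left_injective 1)).congr (fun h => by
      simp only [Function.comp_apply]; push_cast; ring)
  have hs' : Summable (fun h : ℕ => ((h : ℝ) + 1) * (p ^ 3 * q ^ (h + 1))) :=
    (hs2.mul_left (p ^ 3)).congr (fun h => by ring)
  have hreal : ∑' h : ℕ, ((h : ℝ) + 1) * (p ^ 3 * q ^ (h + 1)) = p ^ 3 * (q / (1 - q) ^ 2) := by
    have h0 := hs.tsum_eq_zero_add
    rw [tsum_coe_mul_geometric_of_norm_lt_one hnorm] at h0
    push_cast at h0
    have : ∑' h : ℕ, ((h : ℝ) + 1) * (p ^ 3 * q ^ (h + 1))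
        = p ^ 3 * ∑' h : ℕ, ((h : ℝ) + 1) * q ^ (h + 1) := by
      rw [← tsum_mul_left]; exact tsum_congr fun h => by ring
    rw [this]
    simp only [Nat.cast_zero, zero_mul, pow_zero, mul_one, zero_add] at h0
    rw [← h0]
  have hinner : ∑' h : ℕ, (((h + 1 : ℕ)) : ℝ≥0∞) * (ENNReal.ofReal p ^ 3 * ENNReal.ofReal q ^ (h + 1))
      = ENNReal.ofReal (p ^ 3 * (q / (1 - q) ^ 2)) := by
    rw [← hreal, ENNReal.ofReal_tsum_of_nonneg (fun h => by positivity) hs']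
    refine tsum_congr fun h => ?_
    rw [ENNReal.ofReal_mul (by positivity), ENNReal.ofReal_mul (by positivity),
      ENNReal.ofReal_pow hp.le, ENNReal.ofReal_pow hq0]
    congr 1
    push_cast
    rw [ENNReal.ofReal_add (by positivity) zero_le_one, ENNReal.ofReal_natCast,
      ENNReal.ofReal_one]
  rw [hinner]
  have h13 : (0:ℝ) < 1 - q ^ 3 := by
    have := pow_lt_one₀ hq0 hq1 (by norm_num : (3:ℕ) ≠ 0)
    linarith
  have hsub : (1 : ℝ≥0∞) - ENNReal.ofReal q ^ 3 = ENNReal.ofReal (1 - q ^ 3) := by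
    rw [← ENNReal.ofReal_pow hq0, ← ENNReal.ofReal_one, ← ENNReal.ofReal_sub _ (by positivity)]
  rw [hsub, ← ENNReal.ofReal_inv_of_pos h13, ← ENNReal.ofReal_mul (by positivity)]
  congr 1
  have h1q : (1:ℝ) - q = p := by rw [hq]; ring
  rw [h1q]
  field_simp

/-- For `0 < p ≤ 1`, `q = 1 − p`, and `n ≥ 2`, the expected value of the sum of heights
of symmetric peaks in a sample of `n` geometric random variables is `pq(n−2)/(1−q³)`;
the sum over all words converges (absolutely, as all terms are nonnegative). -/
theorem expected_heights_symmetric_peaks (p q : ℝ) (hp : 0 < p) (hp1 : p ≤ 1)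
    (hq : q = 1 - p) (n : ℕ) (hn : 2 ≤ n) :
    Summable (fun w : Fin n → ℕ+ =>
      wordP p q w * (hspL (List.ofFn fun i => (w i : ℕ)) : ℝ)) ∧
    ∑' w : Fin n → ℕ+, wordP p q w * (hspL (List.ofFn fun i => (w i : ℕ)) : ℝ)
      = p * q / (1 - q ^ 3) * ((n : ℝ) - 2) := by
  have hq0 : 0 ≤ q := by rw [hq]; linarith
  have hq1 : q < 1 := by rw [hq]; linarith
  have h13 : (0:ℝ) < 1 - q ^ 3 := by
    have := pow_lt_one₀ hq0 hq1 (by norm_num : (3:ℕ) ≠ 0)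
    linarith
  have hPe : ∀ w : Fin n → ℕ+,
      (∏ j, ENNReal.ofReal p * ENNReal.ofReal q ^ ((w j : ℕ) - 1))
        = ENNReal.ofReal (wordP p q w) := by
    intro w
    unfold wordP
    rw [ENNReal.ofReal_prod_of_nonneg (fun i _ => by positivity)]
    exact Finset.prod_congr rfl fun j _ => by
      rw [ENNReal.ofReal_mul hp.le, ENNReal.ofReal_pow hq0]
  have hwnn : ∀ w : Fin n → ℕ+, 0 ≤ wordP p q w := fun w =>
    Finset.prod_nonneg fun i _ => by positivity
  have hFtoReal : ∀ w : Fin n → ℕ+,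
      (((∏ j, ENNReal.ofReal p * ENNReal.ofReal q ^ ((w j : ℕ) - 1)) *
        ((hspL (List.ofFn fun i => (w i : ℕ)) : ℕ) : ℝ≥0∞)).toReal)
      = wordP p q w * (hspL (List.ofFn fun i => (w i : ℕ)) : ℝ) := by
    intro w
    rw [hPe, ENNReal.toReal_mul, ENNReal.toReal_ofReal (hwnn w), ENNReal.toReal_natCast]
  have hFne : ∀ w : Fin n → ℕ+,
      (∏ j, ENNReal.ofReal p * ENNReal.ofReal q ^ ((w j : ℕ) - 1)) *
        ((hspL (List.ofFn fun i => (w i : ℕ)) : ℕ) : ℝ≥0∞) ≠ ⊤ := by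
    intro w
    rw [hPe]
    exact ENNReal.mul_ne_top ENNReal.ofReal_ne_top (ENNReal.natCast_ne_top _)
  have hcast : ∀ w : Fin n → ℕ+,
      (∏ j, ENNReal.ofReal p * ENNReal.ofReal q ^ ((w j : ℕ) - 1)) *
        ((hspL (List.ofFn fun i => (w i : ℕ)) : ℕ) : ℝ≥0∞)
      = ∑ i ∈ Finset.range (n - 2),
          (∏ j, ENNReal.ofReal p * ENNReal.ofReal q ^ ((w j : ℕ) - 1)) *
          (if hi : i + 2 < n then
            (if (w ⟨i, by omega⟩ : ℕ) < (w ⟨i+1, by omega⟩ : ℕ) ∧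
                (w ⟨i, by omega⟩ : ℕ) = (w ⟨i+2, hi⟩ : ℕ)
             then (((w ⟨i+1, by omega⟩ : ℕ) - (w ⟨i, by omega⟩ : ℕ) : ℕ) : ℝ≥0∞) else 0)
           else 0) := by
    intro w
    rw [← Finset.mul_sum]
    congr 1
    rw [hsp_eq n _ (by simp), Nat.cast_sum]
    refine Finset.sum_congr rfl fun i hi => ?_
    rw [Finset.mem_range] at hi
    have h2 : i + 2 < n := by omega
    rw [dif_pos h2, getD_ofFn w i (by omega), getD_ofFn w (i+1) (by omega),
      getD_ofFn w (i+2) (by omega), apply_ite (Nat.cast : ℕ → ℝ≥0∞), Nat.cast_zero]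
  have key : ∑' w : Fin n → ℕ+,
      (∏ j, ENNReal.ofReal p * ENNReal.ofReal q ^ ((w j : ℕ) - 1)) *
        ((hspL (List.ofFn fun i => (w i : ℕ)) : ℕ) : ℝ≥0∞)
      = ((n - 2 : ℕ) : ℝ≥0∞) * ENNReal.ofReal (p * q / (1 - q ^ 3)) := by
    rw [tsum_congr hcast, Summable.tsum_finsetSum (fun i _ => ENNReal.summable)]
    have hterm : ∀ i ∈ Finset.range (n - 2),
        (∑' w : Fin n → ℕ+,
          (∏ j, ENNReal.ofReal p * ENNReal.ofReal q ^ ((w j : ℕ) - 1)) *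
          (if hi : i + 2 < n then
            (if (w ⟨i, by omega⟩ : ℕ) < (w ⟨i+1, by omega⟩ : ℕ) ∧
                (w ⟨i, by omega⟩ : ℕ) = (w ⟨i+2, hi⟩ : ℕ)
             then (((w ⟨i+1, by omega⟩ : ℕ) - (w ⟨i, by omega⟩ : ℕ) : ℕ) : ℝ≥0∞) else 0)
           else 0))
        = ENNReal.ofReal (p * q / (1 - q ^ 3)) := by
      intro i hi
      rw [Finset.mem_range] at hi
      have h2 : i + 2 < n := by omega
      have hrw : ∀ w : Fin n → ℕ+,
          (∏ j, ENNReal.ofReal p * ENNReal.ofReal q ^ ((w j : ℕ) - 1)) *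
          (if hi : i + 2 < n then
            (if (w ⟨i, by omega⟩ : ℕ) < (w ⟨i+1, by omega⟩ : ℕ) ∧
                (w ⟨i, by omega⟩ : ℕ) = (w ⟨i+2, hi⟩ : ℕ)
             then (((w ⟨i+1, by omega⟩ : ℕ) - (w ⟨i, by omega⟩ : ℕ) : ℕ) : ℝ≥0∞) else 0)
           else 0)
          = (∏ j, ENNReal.ofReal p * ENNReal.ofReal q ^ ((w j : ℕ) - 1)) *
          (if (w ⟨i, by omega⟩ : ℕ) < (w ⟨i+1, by omega⟩ : ℕ) ∧
              (w ⟨i, by omega⟩ : ℕ) = (w ⟨i+2, h2⟩ : ℕ)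
           then (((w ⟨i+1, by omega⟩ : ℕ) - (w ⟨i, by omega⟩ : ℕ) : ℕ) : ℝ≥0∞) else 0) :=
        fun w => by rw [dif_pos h2]
      rw [tsum_congr hrw]
      exact tsum_gi hp hp1 hq ⟨i, by omega⟩ ⟨i+1, by omega⟩ ⟨i+2, h2⟩
        (Fin.ne_of_val_ne (show i ≠ i + 1 by omega))
        (Fin.ne_of_val_ne (show i ≠ i + 2 by omega))
        (Fin.ne_of_val_ne (show i + 1 ≠ i + 2 by omega))
    rw [Finset.sum_congr rfl hterm, Finset.sum_const, Finset.card_range, nsmul_eq_mul]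
  constructor
  · exact (ENNReal.summable_toReal (by
      rw [key]
      exact ENNReal.mul_ne_top (ENNReal.natCast_ne_top _) ENNReal.ofReal_ne_top)).congr
      hFtoReal
  · calc ∑' w : Fin n → ℕ+, wordP p q w * (hspL (List.ofFn fun i => (w i : ℕ)) : ℝ)
        = ∑' w : Fin n → ℕ+,
          (((∏ j, ENNReal.ofReal p * ENNReal.ofReal q ^ ((w j : ℕ) - 1)) *
            ((hspL (List.ofFn fun i => (w i : ℕ)) : ℕ) : ℝ≥0∞)).toReal) :=
          tsum_congr fun w => (hFtoReal w).symm
      _ = (((n - 2 : ℕ) : ℝ≥0∞) * ENNReal.ofReal (p * q / (1 - q ^ 3))).toReal := by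
          rw [← ENNReal.tsum_toReal_eq hFne, key]
      _ = p * q / (1 - q ^ 3) * ((n : ℝ) - 2) := by
          rw [ENNReal.toReal_mul, ENNReal.toReal_natCast,
            ENNReal.toReal_ofReal (div_nonneg (mul_nonneg hp.le hq0) h13.le)]
          rw [Nat.cast_sub hn]
          push_cast
          ring
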